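/- For z in a 2-adic field with |z|_2 ≥ 2, the two roots of x² − z x + 1 = 0 are T_2(z) and z − T_2(z) = 1/T_2(z), and exactly one of them (namely T_2(z)) is a 2-adic integer. -/

import Mathlib

open Finset Filter

/-- Catalan generating function identity, by a nonarchimedean limit argument. -/
lemma catalan_gf_eq {K : Type*} [NormedField K] [IsUltrametricDist K]
    (x S : K) (hx1 : ‖x‖ < 1) (hC : ∀ n : ℕ, ‖(catalan n : K)‖ ≤ 1)
    (hS : HasSum (fun n : ℕ => (catalan n : K) * x ^ n) S) :
    x * S ^ 2 - S + 1 = 0 := by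
  set f : ℕ → K := fun n => (catalan n : K) * x ^ n with hf
  have hx0 : (0:ℝ) ≤ ‖x‖ := norm_nonneg x
  have hfn : ∀ n, ‖f n‖ ≤ ‖x‖ ^ n := by
    intro n
    calc ‖f n‖ = ‖(catalan n : K)‖ * ‖x ^ n‖ := norm_mul _ _
      _ ≤ 1 * ‖x‖ ^ n := by
          apply mul_le_mul (hC n) (le_of_eq (norm_pow _ _)) (norm_nonneg _) zero_le_one
      _ = ‖x‖ ^ n := one_mul _
  set P : ℕ → K := fun N => ∑ n ∈ range N, f n with hP
  -- key estimate
  have key : ∀ N : ℕ, ‖P (N + 1) - (x * (P N) ^ 2 + 1)‖ ≤ ‖x‖ ^ N := by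
    intro N
    have hbox : (P N) ^ 2 = ∑ p ∈ range N ×ˢ range N, f p.1 * f p.2 := by
      rw [sq, hP]
      rw [Finset.sum_mul_sum]
      rw [Finset.sum_product]
    have hsplit :
        ∑ p ∈ range N ×ˢ range N, f p.1 * f p.2 =
          (∑ p ∈ (range N ×ˢ range N).filter (fun p => p.1 + p.2 < N), f p.1 * f p.2)
          + ∑ p ∈ (range N ×ˢ range N).filter (fun p => ¬ p.1 + p.2 < N), f p.1 * f p.2 :=
      (Finset.sum_filter_add_sum_filter_not _ _ _).symm
    have htri : (range N ×ˢ range N).filter (fun p => p.1 + p.2 < N)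
        = (range N).biUnion Finset.HasAntidiagonal.antidiagonal := by
      ext p
      simp only [mem_filter, mem_product, mem_range, mem_biUnion, Finset.HasAntidiagonal.mem_antidiagonal]
      constructor
      · rintro ⟨⟨h1, h2⟩, h3⟩; exact ⟨p.1 + p.2, h3, rfl⟩
      · rintro ⟨n, hn, rfl⟩; omega
    have hdisj : ∀ i ∈ range N, ∀ j ∈ range N, i ≠ j →
        Disjoint (Finset.HasAntidiagonal.antidiagonal i) (Finset.HasAntidiagonal.antidiagonal j) := by
      intro i _ j _ hij
      rw [Finset.disjoint_left]
      intro p hp hq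
      rw [Finset.HasAntidiagonal.mem_antidiagonal] at hp hq
      exact hij (hp ▸ hq)
    have hanti : ∀ n : ℕ, ∑ p ∈ Finset.HasAntidiagonal.antidiagonal n, f p.1 * f p.2
        = (catalan (n + 1) : K) * x ^ n := by
      intro n
      have : ∀ p ∈ Finset.HasAntidiagonal.antidiagonal n,
          f p.1 * f p.2 = ((catalan p.1 * catalan p.2 : ℕ) : K) * x ^ n := by
        intro p hp
        rw [Finset.HasAntidiagonal.mem_antidiagonal] at hp
        simp only [hf]
        push_cast
        rw [← hp]
        ring
      rw [Finset.sum_congr rfl this, ← Finset.sum_mul, catalan_succ']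
      push_cast
      ring
    have htrisum : ∑ p ∈ (range N ×ˢ range N).filter (fun p => p.1 + p.2 < N), f p.1 * f p.2
        = ∑ n ∈ range N, (catalan (n + 1) : K) * x ^ n := by
      rw [htri, Finset.sum_biUnion hdisj]
      exact Finset.sum_congr rfl fun n _ => hanti n
    have hPsucc : P (N + 1) = 1 + ∑ n ∈ range N, (catalan (n + 1) : K) * x ^ (n + 1) := by
      show ∑ n ∈ range (N + 1), f n = _
      rw [Finset.sum_range_succ' f N]
      simp only [hf, catalan_zero, Nat.cast_one, pow_zero, mul_one, one_mul]
      ring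
    have hE : P (N + 1) - (x * (P N) ^ 2 + 1)
        = - (x * ∑ p ∈ (range N ×ˢ range N).filter (fun p => ¬ p.1 + p.2 < N), f p.1 * f p.2) := by
      rw [hbox, hsplit, htrisum, hPsucc, mul_add, Finset.mul_sum]
      have hterm : ∀ n ∈ range N, x * ((catalan (n + 1) : K) * x ^ n)
          = (catalan (n + 1) : K) * x ^ (n + 1) := by
        intro n _; ring
      rw [Finset.sum_congr rfl hterm]
      ring
    rw [hE, norm_neg]
    calc ‖x * ∑ p ∈ (range N ×ˢ range N).filter (fun p => ¬ p.1 + p.2 < N), f p.1 * f p.2‖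
        = ‖x‖ * ‖∑ p ∈ (range N ×ˢ range N).filter (fun p => ¬ p.1 + p.2 < N), f p.1 * f p.2‖ :=
          norm_mul _ _
      _ ≤ 1 * ‖x‖ ^ N := by
          apply mul_le_mul hx1.le _ (norm_nonneg _) zero_le_one
          apply IsUltrametricDist.norm_sum_le_of_forall_le_of_nonneg (pow_nonneg hx0 N)
          intro p hp
          rw [mem_filter] at hp
          calc ‖f p.1 * f p.2‖ ≤ ‖x‖ ^ p.1 * ‖x‖ ^ p.2 := by
                rw [norm_mul]
                exact mul_le_mul (hfn p.1) (hfn p.2) (norm_nonneg _) (pow_nonneg hx0 _)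
            _ = ‖x‖ ^ (p.1 + p.2) := (pow_add _ _ _).symm
            _ ≤ ‖x‖ ^ N := pow_le_pow_of_le_one hx0 hx1.le (by omega)
      _ = ‖x‖ ^ N := one_mul _
  -- limits
  have hPlim : Tendsto P atTop (nhds S) := hS.tendsto_sum_nat
  have h1 : Tendsto (fun N => P (N + 1)) atTop (nhds S) :=
    hPlim.comp (tendsto_add_atTop_nat 1)
  have h2 : Tendsto (fun N => x * (P N) ^ 2 + 1) atTop (nhds (x * S ^ 2 + 1)) := by
    exact (((hPlim.pow 2).const_mul x).add tendsto_const_nhds)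
  have h3 : Tendsto (fun N => P (N + 1) - (x * (P N) ^ 2 + 1)) atTop
      (nhds (S - (x * S ^ 2 + 1))) := h1.sub h2
  have h4 : Tendsto (fun N => P (N + 1) - (x * (P N) ^ 2 + 1)) atTop (nhds 0) :=
    squeeze_zero_norm key (tendsto_pow_atTop_nhds_zero_of_lt_one hx0 hx1)
  have h5 : S - (x * S ^ 2 + 1) = 0 := tendsto_nhds_unique h3 h4
  linear_combination -h5

/-- For `z` in a 2-adic field with `|z|_2 ≥ 2`, the two roots of `x^2 - z x + 1 = 0`
are `T_2(z)` (the sum of the Catalan series) and `z - T_2(z) = 1/T_2(z)`, and exactly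
one of them, namely `T_2(z)`, is a 2-adic integer. -/
theorem stmt_9 (K : Type*) [NormedField K] [IsUltrametricDist K] [NormedAlgebra ℚ_[2] K]
    (halg : Algebra.IsAlgebraic ℚ_[2] K)
    (hiso : ∀ q : ℚ_[2], ‖algebraMap ℚ_[2] K q‖ = ‖q‖)
    (hval : ∀ x : K, x ≠ 0 → ∃ n : ℤ, ‖x‖ = 2 ^ n)
    (z w : K) (hz : 2 ≤ ‖z‖)
    (hw : HasSum (fun n : ℕ => (catalan n : K) * (z⁻¹) ^ (2 * n + 1)) w) :
    w ^ 2 - z * w + 1 = 0 ∧ (z - w) ^ 2 - z * (z - w) + 1 = 0 ∧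
    z - w = w⁻¹ ∧
    (∀ x : K, x ^ 2 - z * x + 1 = 0 → x = w ∨ x = z - w) ∧
    ‖w‖ ≤ 1 ∧ ¬ ‖z - w‖ ≤ 1 := by
  have hz0 : z ≠ 0 := by
    intro h; rw [h, norm_zero] at hz; linarith
  have hC : ∀ n : ℕ, ‖(catalan n : K)‖ ≤ 1 := by
    intro n
    have : ((catalan n : ℕ) : K) = algebraMap ℚ_[2] K ((catalan n : ℕ) : ℚ_[2]) := by
      rw [map_natCast]
    rw [this, hiso]
    exact_mod_cast Padic.norm_int_le_one (catalan n : ℤ)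
  have hzinv : ‖z⁻¹‖ ≤ 1 / 2 := by
    rw [norm_inv]
    rw [inv_le_comm₀ (by linarith) (by norm_num)]
    simpa using hz
  set x : K := z⁻¹ ^ 2 with hxdef
  have hx1 : ‖x‖ < 1 := by
    rw [hxdef, norm_pow]
    nlinarith [norm_nonneg (z⁻¹)]
  -- rewrite hw
  have hS : HasSum (fun n : ℕ => (catalan n : K) * x ^ n) (z * w) := by
    have := hw.mul_left z
    rw [show (fun n : ℕ => (catalan n : K) * x ^ n) = fun i => z * ((catalan i : K) * z⁻¹ ^ (2 * i + 1)) from ?_]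
    · exact this
    funext n
    rw [hxdef, ← pow_mul, pow_succ]
    linear_combination (-((catalan n : K) * z⁻¹ ^ (2 * n))) * mul_inv_cancel₀ hz0
  have hkey : x * (z * w) ^ 2 - (z * w) + 1 = 0 := catalan_gf_eq x (z * w) hx1 hC hS
  have hzinvz : z⁻¹ * z = 1 := inv_mul_cancel₀ hz0
  have heq1 : w ^ 2 - z * w + 1 = 0 := by
    have : x * (z * w) ^ 2 = w ^ 2 := by
      rw [hxdef]; field_simp
    rw [this] at hkey
    exact hkey
  have heq2 : (z - w) ^ 2 - z * (z - w) + 1 = 0 := by ring_nf; linear_combination heq1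
  have hmul : w * (z - w) = 1 := by linear_combination -heq1
  have hw0 : w ≠ 0 := by
    intro h; rw [h, zero_mul] at hmul; exact one_ne_zero hmul.symm
  have heq3 : z - w = w⁻¹ := eq_inv_of_mul_eq_one_left (by linear_combination hmul)
  -- roots
  have hroots : ∀ x : K, x ^ 2 - z * x + 1 = 0 → x = w ∨ x = z - w := by
    intro t ht
    have : (t - w) * (t - (z - w)) = 0 := by linear_combination ht - heq1 - (t - w) * hmul + (t-w)*hmul
    rcases mul_eq_zero.mp this with h | h
    · left; exact sub_eq_zero.mp h
    · right; exact sub_eq_zero.mp h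
  -- norm of w
  have hwle : ‖w‖ ≤ 1 / 2 := by
    have hterm : ∀ n : ℕ, ‖(catalan n : K) * (z⁻¹) ^ (2 * n + 1)‖ ≤ 1 / 2 := by
      intro n
      rw [norm_mul, norm_pow]
      calc ‖(catalan n : K)‖ * ‖z⁻¹‖ ^ (2 * n + 1)
          ≤ 1 * (1/2) ^ (2 * n + 1) := by
            apply mul_le_mul (hC n) _ (pow_nonneg (norm_nonneg _) _) zero_le_one
            exact pow_le_pow_left₀ (norm_nonneg _) hzinv _
        _ ≤ 1 * (1/2) ^ 1 := by
            apply mul_le_mul le_rfl _ (pow_nonneg (by norm_num) _) zero_le_one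
            apply pow_le_pow_of_le_one (by norm_num) (by norm_num) (by omega)
        _ = 1 / 2 := by norm_num
    have hpart : ∀ N : ℕ, ‖∑ n ∈ Finset.range N, (catalan n : K) * (z⁻¹) ^ (2 * n + 1)‖ ≤ 1/2 := by
      intro N
      exact IsUltrametricDist.norm_sum_le_of_forall_le_of_nonneg (by norm_num)
        (fun n _ => hterm n)
    have := hw.tendsto_sum_nat
    have hnorm : Tendsto (fun N => ‖∑ n ∈ Finset.range N, (catalan n : K) * (z⁻¹) ^ (2 * n + 1)‖)
        atTop (nhds ‖w‖) := this.norm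
    exact le_of_tendsto hnorm (Filter.Eventually.of_forall hpart)
  have hwle1 : ‖w‖ ≤ 1 := le_trans hwle (by norm_num)
  -- norm of z - w
  have hzw : ¬ ‖z - w‖ ≤ 1 := by
    intro h
    have : ‖z‖ ≤ max ‖z - w‖ ‖w‖ := by
      have := IsUltrametricDist.norm_add_le_max (z - w) w
      simpa using this
    have : ‖z‖ ≤ 1 := le_trans this (max_le h hwle1)
    linarith
  exact ⟨heq1, heq2, heq3, hroots, hwle1, hzw⟩
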